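/- arXiv:2410.07231 — 3 statements merged into one kernel-verified Lean document; each statement's English description precedes it below -/
import Mathlib

section
/- Let A be a 2×2 matrix with integer entries such that det A = 1 and tr A > 2, and let v = (v₀, v₁) ∈ ℝ² be a nonzero vector with A·v = λ₊·v, where λ₊ = (tr A + √((tr A)² − 4))/2. Then every orbit of the linear flow on the 2-torus in direction v is dense: for every x ∈ ℝ², the map ℝ → 𝕋² = (ℝ/ℤ)² sending t to the class of (x₀ + t·v₀, x₁ + t·v₁) has dense range. -/
/-- The set `{n·α + m : n, m ∈ ℤ}` is dense in `ℝ` when `α` is irrational. -/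
lemma dense_int_comb {α : ℝ} (hα : Irrational α) :
    Dense {r : ℝ | ∃ n m : ℤ, r = n * α + m} := by
  set S := AddSubgroup.zmultiples α ⊔ AddSubgroup.zmultiples (1 : ℝ) with hSdef
  have hαS : α ∈ S := AddSubgroup.mem_sup_left (AddSubgroup.mem_zmultiples α)
  have h1S : (1 : ℝ) ∈ S := AddSubgroup.mem_sup_right (AddSubgroup.mem_zmultiples 1)
  rcases S.dense_or_cyclic with hd | ⟨a, ha⟩
  · refine hd.mono ?_
    rintro r hr
    rw [SetLike.mem_coe, AddSubgroup.mem_sup] at hr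
    obtain ⟨y, hy, z, hz, hyz⟩ := hr
    obtain ⟨n, rfl⟩ := AddSubgroup.mem_zmultiples_iff.mp hy
    obtain ⟨m, rfl⟩ := AddSubgroup.mem_zmultiples_iff.mp hz
    exact ⟨n, m, by rw [← hyz]; simp [zsmul_eq_mul]⟩
  · exfalso
    rw [ha, AddSubgroup.mem_closure_singleton] at hαS h1S
    obtain ⟨q, hq⟩ := hαS
    obtain ⟨p, hp⟩ := h1S
    have hp0 : p ≠ 0 := by
      rintro rfl; simp at hp
    have ha0 : (p : ℝ) * a = 1 := by rw [← hp]; simp [zsmul_eq_mul]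
    have hpR : (p : ℝ) ≠ 0 := Int.cast_ne_zero.mpr hp0
    refine hα ⟨(q : ℚ) / (p : ℚ), ?_⟩
    have haval : a = 1 / (p : ℝ) := by field_simp at ha0 ⊢; linarith
    rw [← hq]
    push_cast
    rw [zsmul_eq_mul, haval]
    field_simp

/-- Let `A` be a 2×2 integer matrix with `det A = 1`, `tr A > 2`, and let `v` be
a nonzero real eigenvector for the eigenvalue `λ₊ = (tr A + √((tr A)² − 4))/2`.
Then every orbit of the linear flow on the 2-torus in direction `v` is dense. -/
theorem anosov_eigendirection_flow_dense (A : Matrix (Fin 2) (Fin 2) ℤ)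
    (hdet : A.det = 1) (htr : A.trace > 2)
    (lamP : ℝ)
    (hP : lamP = ((A.trace : ℝ) + Real.sqrt ((A.trace : ℝ) ^ 2 - 4)) / 2)
    (v : Fin 2 → ℝ) (hv : v ≠ 0)
    (heig : (A.map (Int.cast : ℤ → ℝ)).mulVec v = lamP • v)
    (x : Fin 2 → ℝ) :
    DenseRange (fun t : ℝ =>
      (fun i => (↑(x i + t * v i) : AddCircle (1 : ℝ)) : Fin 2 → AddCircle (1 : ℝ))) := by
  have htr3 : (3 : ℤ) ≤ A.trace := htr
  -- the eigenvalue is irrational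
  have hsq : Irrational (Real.sqrt ((A.trace : ℝ) ^ 2 - 4)) := by
    have hcast : ((A.trace : ℝ) ^ 2 - 4) = ((A.trace ^ 2 - 4 : ℤ) : ℝ) := by push_cast; ring
    rw [hcast, irrational_sqrt_intCast_iff_of_nonneg (by nlinarith)]
    rintro ⟨s, hs⟩
    have hs' : |s| * |s| = A.trace ^ 2 - 4 := by rw [abs_mul_abs_self]; omega
    have h0 : 0 ≤ |s| := abs_nonneg s
    have hlt : |s| < A.trace := by nlinarith
    have hle : |s| ≤ A.trace - 1 := by omega
    nlinarith
  have hlam : Irrational lamP := by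
    rw [hP]
    have h := (hsq.intCast_add A.trace).div_intCast (m := 2) two_ne_zero
    simpa using h
  -- unpack the eigenvalue equations
  have he0 := congrFun heig 0
  have he1 := congrFun heig 1
  simp only [Matrix.mulVec, dotProduct, Fin.sum_univ_two, Matrix.map_apply,
    Pi.smul_apply, smul_eq_mul] at he0 he1
  -- both coordinates of v are nonzero
  have hv0 : v 0 ≠ 0 := by
    intro h0
    have hv1 : v 1 ≠ 0 := by
      intro h1; apply hv; funext i; fin_cases i <;> assumption
    have : lamP = (A 1 1 : ℝ) := by
      rw [h0] at he1
      simp only [mul_zero, zero_mul, add_zero, zero_add, mul_eq_mul_right_iff] at he1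
      rcases he1 with h | h
      · linarith
      · exact absurd h hv1
    exact hlam.ne_int (A 1 1) this
  have hv1 : v 1 ≠ 0 := by
    intro h1
    have : lamP = (A 0 0 : ℝ) := by
      rw [h1] at he0
      simp only [mul_zero, zero_mul, add_zero, zero_add, mul_eq_mul_right_iff] at he0
      rcases he0 with h | h
      · linarith
      · exact absurd h hv0
    exact hlam.ne_int (A 0 0) this
  -- the slope is irrational
  have hb : A 0 1 ≠ 0 := by
    intro hb0
    have : lamP = (A 0 0 : ℝ) := by
      rw [hb0] at he0
      push_cast at he0
      simp only [mul_zero, zero_mul, add_zero, zero_add, mul_eq_mul_right_iff] at he0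
      rcases he0 with h | h
      · linarith
      · exact absurd h hv0
    exact hlam.ne_int (A 0 0) this
  set α : ℝ := v 1 / v 0 with hαdef
  have hα : Irrational α := by
    have hbR : ((A 0 1 : ℤ) : ℝ) ≠ 0 := Int.cast_ne_zero.mpr hb
    have hval : α = (lamP - (A 0 0 : ℝ)) / ((A 0 1 : ℤ) : ℝ) := by
      rw [hαdef]
      field_simp
      linarith [he0]
    rw [hval]
    exact (hlam.sub_intCast (A 0 0)).div_intCast hb
  -- the ℤ²-saturated line is dense in ℝ²
  set S : Set (Fin 2 → ℝ) :=
    {y | ∃ t : ℝ, ∃ m : Fin 2 → ℤ, y = fun i => x i + t * v i + (m i : ℝ)} with hSdef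
  have hdenseS : Dense S := by
    rw [Metric.dense_iff]
    intro y ε hε
    obtain ⟨g, hgball, n, m, rfl⟩ :=
      Metric.dense_iff.mp (dense_int_comb hα) ((y 1 - x 1) - (y 0 - x 0) * α) ε hε
    set t0 : ℝ := (y 0 - x 0 + n) / v 0 with ht0
    refine ⟨fun i => x i + t0 * v i + ((![-n, m] : Fin 2 → ℤ) i : ℝ), ?_, t0, ![-n, m], rfl⟩
    rw [Metric.mem_ball, dist_pi_lt_iff hε]
    intro i
    fin_cases i
    · have h0 : x 0 + t0 * v 0 + -(n : ℝ) = y 0 := by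
        rw [ht0]; field_simp; ring
      simpa [Matrix.cons_val_zero, h0] using hε
    · have h1 : x 1 + t0 * v 1 + (m : ℝ) = (n * α + m) + (x 1 + (y 0 - x 0) * α) := by
        rw [ht0, hαdef]; field_simp; ring
      have : dist (x 1 + t0 * v 1 + (m : ℝ)) (y 1)
          = dist ((n : ℝ) * α + m) ((y 1 - x 1) - (y 0 - x 0) * α) := by
        rw [h1, Real.dist_eq, Real.dist_eq]
        ring_nf
      simpa [Matrix.cons_val_one, Matrix.head_cons, this] using hgball
  -- push density through the quotient map
  set π : (Fin 2 → ℝ) → (Fin 2 → AddCircle (1 : ℝ)) :=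
    fun y i => (y i : AddCircle (1 : ℝ)) with hπdef
  have hπc : Continuous π :=
    continuous_pi fun i => Continuous.comp continuous_quotient_mk' (continuous_apply i)
  have hπs : Function.Surjective π := by
    intro y
    exact ⟨fun i => (QuotientAddGroup.mk_surjective (y i)).choose,
      funext fun i => (QuotientAddGroup.mk_surjective (y i)).choose_spec⟩
  have him : π '' S ⊆ Set.range (fun t : ℝ =>
      (fun i => (↑(x i + t * v i) : AddCircle (1 : ℝ)) : Fin 2 → AddCircle (1 : ℝ))) := by
    rintro _ ⟨y, ⟨t0, m, rfl⟩, rfl⟩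
    refine ⟨t0, ?_⟩
    funext i
    show (↑(x i + t0 * v i) : AddCircle (1 : ℝ)) = ↑(x i + t0 * v i + (m i : ℝ))
    have hz : ((m i : ℝ) : AddCircle (1 : ℝ)) = 0 :=
      (AddCircle.coe_eq_zero_iff 1).mpr ⟨m i, by simp⟩
    rw [AddCircle.coe_add (p := (1 : ℝ)) (x i + t0 * v i) ((m i : ℝ)), hz, add_zero]
  exact Dense.mono him (hπs.denseRange.dense_image hπc hdenseS)
end

section
/- Let n ≥ 1 and let a = (a₁, …, aₙ) ∈ ℝⁿ be such that a₁, …, aₙ are linearly independent over ℚ and every aᵢ is an algebraic number (algebraic over ℚ). Then a is Diophantine: there exist real numbers C > 0 and τ > 0 such that for every nonzero m ∈ ℤⁿ one has |m₁·a₁ + ⋯ + mₙ·aₙ| ≥ C/‖m‖^τ, where ‖m‖ = max₁≤i≤n |mᵢ|. -/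
set_option maxHeartbeats 1000000

noncomputable def Complex.abs : AbsoluteValue ℂ ℝ :=
  IsAbsoluteValue.toAbsoluteValue (norm : ℂ → ℝ)

theorem Complex.abs_intCast (z : ℤ) : Complex.abs (z : ℂ) = |(z : ℝ)| := by
  show ‖(z : ℂ)‖ = _
  rw [Complex.norm_intCast]

theorem Complex.abs_ofReal (r : ℝ) : Complex.abs (r : ℂ) = |r| := by
  show ‖(r : ℂ)‖ = _
  rw [Complex.norm_real, Real.norm_eq_abs]

/-- A vector `a ∈ ℝⁿ` whose components are linearly independent over `ℚ` and
all algebraic over `ℚ` is Diophantine: there exist `C > 0` and `τ > 0` such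
that `|⟨m, a⟩| ≥ C / ‖m‖^τ` for every nonzero integer vector `m`, where
`‖m‖ = maxᵢ |mᵢ|`. -/
theorem algebraic_vector_is_diophantine (n : ℕ) (hn : 1 ≤ n) (a : Fin n → ℝ)
    (hindep : LinearIndependent ℚ a)
    (halg : ∀ i, IsAlgebraic ℚ (a i)) :
    ∃ C > (0 : ℝ), ∃ τ > (0 : ℝ), ∀ m : Fin n → ℤ, m ≠ 0 →
      C / ((Finset.univ.sup fun i => (m i).natAbs : ℕ) : ℝ) ^ τ ≤
        |∑ i, (m i : ℝ) * a i| := by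
  classical
  set K := IntermediateField.adjoin ℚ (Set.range a) with hK
  haveI : FiniteDimensional ℚ K := by
    apply IntermediateField.finiteDimensional_adjoin
    rintro x ⟨i, rfl⟩
    exact (halg i).isIntegral
  have hmem : ∀ i, a i ∈ K := fun i => IntermediateField.subset_adjoin ℚ _ ⟨i, rfl⟩
  set b : Fin n → K := fun i => ⟨a i, hmem i⟩ with hb
  have hbindep : LinearIndependent ℚ b := by
    apply LinearIndependent.of_comp K.val.toLinearMap
    exact hindep
  -- integral denominators
  have hmul : ∀ i, ∃ y : ℤ, y ≠ 0 ∧ IsIntegral ℤ ((y : K) * b i) := by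
    intro i
    have halgz : IsAlgebraic ℤ (b i) := by
      rw [IsFractionRing.isAlgebraic_iff ℤ ℚ K]
      exact Algebra.IsAlgebraic.isAlgebraic (b i)
    obtain ⟨y, hy, hxy⟩ := halgz.exists_integral_multiple
    refine ⟨y, hy, ?_⟩
    rwa [zsmul_eq_mul] at hxy
  choose y hy0 hyint using hmul
  set D : ℤ := ∏ i, y i with hD
  have hD0 : D ≠ 0 := Finset.prod_ne_zero_iff.mpr fun i _ => hy0 i
  have hintz : ∀ z : ℤ, IsIntegral ℤ ((z : K)) := fun z => by
    simpa using isIntegral_algebraMap (A := K) (x := z)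
  have hDint : ∀ i, IsIntegral ℤ ((D : K) * b i) := by
    intro i
    have h1 : ((∏ j ∈ Finset.univ.erase i, y j : ℤ) : K) * ((y i : K) * b i) = (D:K) * b i := by
      rw [hD, ← Finset.prod_erase_mul Finset.univ y (Finset.mem_univ i)]
      push_cast
      ring
    rw [← h1]
    exact (hintz _).mul (hyint i)
  -- the embedding of K into ℂ coming from ℝ
  let ι : K →ₐ[ℚ] ℂ := (Complex.ofRealAm.restrictScalars ℚ).comp K.val
  -- the constant M
  set M : ℝ := 1 + ∑ σ : K →ₐ[ℚ] ℂ, ∑ i, Complex.abs (σ (b i)) with hM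
  have hM1 : (1 : ℝ) ≤ M := by
    rw [hM]
    have : (0:ℝ) ≤ ∑ σ : K →ₐ[ℚ] ℂ, ∑ i, Complex.abs (σ (b i)) :=
      Finset.sum_nonneg fun σ _ => Finset.sum_nonneg fun i _ => AbsoluteValue.nonneg _ _
    linarith
  have hMb : ∀ (σ : K →ₐ[ℚ] ℂ) i, Complex.abs (σ (b i)) ≤ M := by
    intro σ i
    rw [hM]
    have h1 : Complex.abs (σ (b i)) ≤ ∑ j, Complex.abs (σ (b j)) :=
      Finset.single_le_sum (f := fun j => Complex.abs (σ (b j)))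
        (fun j _ => AbsoluteValue.nonneg _ _) (Finset.mem_univ i)
    have h2 : ∑ j, Complex.abs (σ (b j)) ≤ ∑ τ : K →ₐ[ℚ] ℂ, ∑ j, Complex.abs (τ (b j)) :=
      Finset.single_le_sum (f := fun τ : K →ₐ[ℚ] ℂ => ∑ j, Complex.abs (τ (b j)))
        (fun τ _ => Finset.sum_nonneg fun j _ => AbsoluteValue.nonneg _ _) (Finset.mem_univ σ)
    linarith
  set E : ℝ := (|D| : ℝ) * n * M with hE
  have hDabs1 : (1 : ℝ) ≤ (|D| : ℝ) := by exact_mod_cast Int.one_le_abs hD0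
  have hE1 : (1 : ℝ) ≤ E := by
    rw [hE]
    have hn' : (1:ℝ) ≤ (n:ℝ) := by exact_mod_cast hn
    have h1 : (1:ℝ) ≤ (|D|:ℝ) * n :=
      le_trans hDabs1 (le_mul_of_one_le_right (by linarith) hn')
    exact le_trans h1 (le_mul_of_one_le_right (by linarith) hM1)
  set d : ℕ := Fintype.card (K →ₐ[ℚ] ℂ) with hd
  have hd0 : 0 < d := Fintype.card_pos_iff.mpr ⟨ι⟩
  refine ⟨1 / ((|D| : ℝ) * E ^ d), by positivity, d, by exact_mod_cast hd0, ?_⟩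
  intro m hm
  set S : ℕ := Finset.univ.sup fun i => (m i).natAbs with hS
  have hS1 : 1 ≤ S := by
    obtain ⟨i, hi⟩ := Function.ne_iff.mp hm
    calc 1 ≤ (m i).natAbs := Int.natAbs_pos.mpr (by simpa using hi)
    _ ≤ S := Finset.le_sup (f := fun i => (m i).natAbs) (Finset.mem_univ i)
  have hS1' : (1:ℝ) ≤ (S:ℝ) := by exact_mod_cast hS1
  have hmS : ∀ i, |(m i : ℝ)| ≤ (S : ℝ) := by
    intro i
    rw [← Int.cast_abs, Int.abs_eq_natAbs]
    exact_mod_cast Finset.le_sup (f := fun i => (m i).natAbs) (Finset.mem_univ i)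
  -- the algebraic number
  set α : K := ∑ i, (m i : K) * b i with hα
  have hα0 : α ≠ 0 := by
    intro h
    apply hm
    have h2 : ∑ i, ((m i : ℚ)) • b i = 0 := by
      rw [← h, hα]
      refine Finset.sum_congr rfl fun i _ => ?_
      rw [Algebra.smul_def, map_intCast]
    have h3 := Fintype.linearIndependent_iff.mp hbindep _ h2
    funext i
    have h4 := h3 i
    simp only [Pi.zero_apply]
    exact_mod_cast h4
  have hαint : IsIntegral ℤ ((D : K) * α) := by
    rw [hα, Finset.mul_sum]
    apply IsIntegral.sum
    intro i _
    have h1 : (D : K) * ((m i : K) * b i) = ((m i : ℤ) : K) * ((D:K) * b i) := by push_cast; ring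
    rw [h1]
    exact (hintz _).mul (hDint i)
  -- the norm
  set N : ℚ := Algebra.norm ℚ ((D : K) * α) with hN
  have hN0 : N ≠ 0 := by
    rw [hN, Algebra.norm_ne_zero_iff]
    exact mul_ne_zero (by exact_mod_cast hD0) hα0
  have hNabs : (1 : ℝ) ≤ |(N : ℝ)| := by
    obtain ⟨z, hz⟩ := IsIntegrallyClosed.isIntegral_iff.mp
      (Algebra.isIntegral_norm ℚ hαint)
    have hz0 : z ≠ 0 := by rintro rfl; exact hN0 (by rw [hN, ← hz]; simp)
    have : ((z : ℚ) : ℝ) = (N : ℝ) := by exact_mod_cast congrArg (fun q : ℚ => (q:ℝ)) hz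
    rw [← this]
    push_cast
    exact_mod_cast Int.one_le_abs hz0
  -- norm as product of embeddings
  have hprod : |(N : ℝ)| = ∏ σ : K →ₐ[ℚ] ℂ, Complex.abs (σ ((D:K) * α)) := by
    have := Algebra.norm_eq_prod_embeddings ℚ ℂ ((D:K) * α)
    have h2 : Complex.abs (algebraMap ℚ ℂ N) = |(N : ℝ)| := by
      rw [show (algebraMap ℚ ℂ N) = ((N:ℝ):ℂ) by push_cast; simp, Complex.abs_ofReal]
    rw [← h2, hN, this, map_prod]
  -- bound each embedding
  have hbound : ∀ σ : K →ₐ[ℚ] ℂ, Complex.abs (σ ((D:K) * α)) ≤ E * S := by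
    intro σ
    have hexp : σ ((D:K) * α) = (D:ℂ) * ∑ i, (m i : ℂ) * σ (b i) := by
      rw [map_mul, hα, map_sum, map_intCast]
      congr 1
      refine Finset.sum_congr rfl fun i _ => ?_
      rw [map_mul, map_intCast]
    rw [hexp, map_mul]
    have h1 : Complex.abs ((D:ℂ)) = (|D| : ℝ) := by
      rw [Complex.abs_intCast]
    rw [h1]
    have h2 : Complex.abs (∑ i, (m i : ℂ) * σ (b i)) ≤ n * M * S := by
      calc Complex.abs (∑ i, (m i : ℂ) * σ (b i)) ≤ ∑ i, Complex.abs ((m i : ℂ) * σ (b i)) :=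
            Complex.abs.sum_le _ _
        _ ≤ ∑ _i : Fin n, M * S := by
            apply Finset.sum_le_sum
            intro i _
            rw [map_mul]
            have hmi : Complex.abs ((m i : ℂ)) ≤ (S : ℝ) := by
              rw [Complex.abs_intCast]
              exact hmS i
            calc Complex.abs ((m i:ℂ)) * Complex.abs (σ (b i)) ≤ (S:ℝ) * M := by
                  apply mul_le_mul hmi (hMb σ i) (AbsoluteValue.nonneg _ _)
                  exact le_trans (by norm_num) hS1'
              _ = M * S := by ring
        _ = n * M * S := by rw [Finset.sum_const, Finset.card_univ, Fintype.card_fin]; ring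
    calc (|D|:ℝ) * Complex.abs (∑ i, (m i : ℂ) * σ (b i)) ≤ (|D|:ℝ) * (n * M * S) := by
          apply mul_le_mul_of_nonneg_left h2 (by positivity)
      _ = E * S := by rw [hE]; ring
  -- assemble
  have hES1 : (1:ℝ) ≤ E * S := by nlinarith
  have key : (1 : ℝ) ≤ (|D|:ℝ) * |(K.val α : ℝ)| * (E * S) ^ d := by
    have hsplit : ∏ σ : K →ₐ[ℚ] ℂ, Complex.abs (σ ((D:K) * α))
        = Complex.abs (ι ((D:K) * α)) * ∏ σ ∈ Finset.univ.erase ι, Complex.abs (σ ((D:K) * α)) := by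
      exact (Finset.mul_prod_erase Finset.univ
        (fun σ : K →ₐ[ℚ] ℂ => Complex.abs (σ ((D:K) * α))) (Finset.mem_univ ι)).symm
    have hι : Complex.abs (ι ((D:K) * α)) = (|D|:ℝ) * |(K.val α : ℝ)| := by
      have e1 : ι ((D:K) * α) = (D:ℂ) * ((K.val α : ℝ) : ℂ) := by
        rw [map_mul, map_intCast]; rfl
      rw [e1, map_mul, Complex.abs_intCast, Complex.abs_ofReal]
    have hrest : ∏ σ ∈ Finset.univ.erase ι, Complex.abs (σ ((D:K) * α)) ≤ (E * S) ^ d := by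
      calc ∏ σ ∈ Finset.univ.erase ι, Complex.abs (σ ((D:K) * α))
          ≤ ∏ _σ ∈ Finset.univ.erase ι, (E * S) := by
            apply Finset.prod_le_prod (fun σ _ => AbsoluteValue.nonneg _ _)
            intro σ _; exact hbound σ
        _ = (E * S) ^ (Finset.univ.erase ι).card := by rw [Finset.prod_const]
        _ ≤ (E * S) ^ d := by
            apply pow_le_pow_right₀ hES1
            calc (Finset.univ.erase ι).card ≤ Finset.univ.card := Finset.card_le_card (Finset.erase_subset _ _)
              _ = d := Finset.card_univ
    calc (1:ℝ) ≤ |(N:ℝ)| := hNabs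
      _ = _ := hprod
      _ = Complex.abs (ι ((D:K) * α)) * ∏ σ ∈ Finset.univ.erase ι, Complex.abs (σ ((D:K) * α)) := hsplit
      _ ≤ ((|D|:ℝ) * |(K.val α : ℝ)|) * (E * S) ^ d := by
          rw [hι]
          apply mul_le_mul_of_nonneg_left hrest (by positivity)
      _ = (|D|:ℝ) * |(K.val α : ℝ)| * (E * S) ^ d := by ring
  have hval : (K.val α : ℝ) = ∑ i, (m i : ℝ) * a i := by
    rw [hα, map_sum]
    refine Finset.sum_congr rfl fun i _ => ?_
    rw [map_mul, map_intCast]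
    rfl
  have hexpand : (E * S) ^ d = E ^ d * (S:ℝ) ^ d := mul_pow E (S:ℝ) d
  rw [hexpand] at key
  rw [← hval, Real.rpow_natCast, div_le_iff₀ (by positivity), div_le_iff₀ (by positivity)]
  nlinarith [key, abs_nonneg (K.val α : ℝ), pow_pos (lt_of_lt_of_le one_pos hE1) d,
    pow_pos (lt_of_lt_of_le one_pos hS1') d]
end

section
/- Let (X, μ) be a finite measure space and let φ : ℝ × X → X be a jointly measurable flow (φ(0, x) = x and φ(s + t, x) = φ(s, φ(t, x)) for all s, t ∈ ℝ and x ∈ X) such that for each t ∈ ℝ the map x ↦ φ(t, x) preserves the measure μ. Let κ : X → ℝ be a bounded measurable function. If for μ-almost every x ∈ X there exists M(x) < ∞ such that |∫₀ᵗ κ(φ(s, x)) ds| ≤ M(x) for all t ≥ 0, then ∫_X κ dμ = 0. -/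
open MeasureTheory

/-- Let `(X, μ)` be a finite measure space and `φ` a jointly measurable,
measure-preserving flow on `X`. If `κ : X → ℝ` is bounded and measurable and
for `μ`-a.e. `x` the integrals `∫₀ᵗ κ(φ(s,x)) ds`, `t ≥ 0`, are uniformly
bounded, then `∫ κ dμ = 0`. -/
theorem integral_zero_of_bounded_time_integrals
    {X : Type*} [MeasurableSpace X] (μ : Measure X) [IsFiniteMeasure μ]
    (φ : ℝ × X → X) (hφmeas : Measurable φ)
    (hφ0 : ∀ x, φ (0, x) = x)
    (hφadd : ∀ s t : ℝ, ∀ x, φ (s + t, x) = φ (s, φ (t, x)))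
    (hφpres : ∀ t : ℝ, MeasurePreserving (fun x => φ (t, x)) μ μ)
    (κ : X → ℝ) (hκmeas : Measurable κ) (hκbdd : ∃ B : ℝ, ∀ x, |κ x| ≤ B)
    (hbound : ∀ᵐ x ∂μ, ∃ M : ℝ, ∀ t : ℝ, 0 ≤ t →
      |∫ s in (0 : ℝ)..t, κ (φ (s, x))| ≤ M) :
    ∫ x, κ x ∂μ = 0 := by
  obtain ⟨B₀, hB₀⟩ := hκbdd
  set B : ℝ := max B₀ 0 with hBdef
  have hB : ∀ x, |κ x| ≤ B := fun x => (hB₀ x).trans (le_max_left _ _)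
  have hBnn : 0 ≤ B := le_max_right _ _
  -- key identity: for T > 0, the space integral of the time integral is T * ∫ κ
  have key : ∀ T : ℝ, 0 < T →
      ∫ x, (∫ s in (0:ℝ)..T, κ (φ (s, x))) ∂μ = T * ∫ x, κ x ∂μ := by
    intro T hT
    have hres : IsFiniteMeasure ((volume : Measure ℝ).restrict (Set.Ioc 0 T)) := by
      constructor
      simp [Real.volume_Ioc]
    have hmeas : Measurable fun p : X × ℝ => κ (φ (p.2, p.1)) :=
      hκmeas.comp (hφmeas.comp (measurable_snd.prodMk measurable_fst))
    have hint : Integrable (Function.uncurry fun x s => κ (φ (s, x)))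
        (μ.prod ((volume : Measure ℝ).restrict (Set.Ioc 0 T))) := by
      refine (integrable_const B).mono' hmeas.aestronglyMeasurable ?_
      exact Filter.Eventually.of_forall fun p => by
        simpa [Real.norm_eq_abs, Function.uncurry] using hB (φ (p.2, p.1))
    have swap := integral_integral_swap hint
    calc ∫ x, (∫ s in (0:ℝ)..T, κ (φ (s, x))) ∂μ
        = ∫ x, (∫ s in Set.Ioc (0:ℝ) T, κ (φ (s, x))) ∂μ := by
          simp only [intervalIntegral.integral_of_le hT.le]
      _ = ∫ s in Set.Ioc (0:ℝ) T, (∫ x, κ (φ (s, x)) ∂μ) := swap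
      _ = ∫ s in Set.Ioc (0:ℝ) T, (∫ x, κ x ∂μ) := by
          refine setIntegral_congr_fun measurableSet_Ioc fun s _ => ?_
          rw [← integral_map (hφpres s).measurable.aemeasurable
            hκmeas.aestronglyMeasurable, (hφpres s).map_eq]
      _ = T * ∫ x, κ x ∂μ := by
          rw [setIntegral_const]
          simp [Real.volume_Ioc, hT.le, smul_eq_mul]
  -- define the averages
  set g : ℕ → X → ℝ := fun n x => (∫ s in (0:ℝ)..(n+1 : ℕ), κ (φ (s, x))) / ((n:ℝ)+1)
    with hgdef
  have hTpos : ∀ n : ℕ, (0:ℝ) < (n:ℝ) + 1 := fun n => by positivity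
  have hgint : ∀ n : ℕ, ∫ x, g n x ∂μ = ∫ x, κ x ∂μ := by
    intro n
    have := key ((n:ℝ)+1) (hTpos n)
    rw [hgdef]
    simp only []
    rw [integral_div]
    push_cast
    rw [this]
    field_simp
  -- dominated convergence
  have hF_meas : ∀ n : ℕ, AEStronglyMeasurable (g n) μ := by
    intro n
    have hmeas : StronglyMeasurable fun p : X × ℝ => κ (φ (p.2, p.1)) :=
      (hκmeas.comp (hφmeas.comp (measurable_snd.prodMk measurable_fst))).stronglyMeasurable
    have h1 : StronglyMeasurable fun x =>
        ∫ s in Set.Ioc (0:ℝ) ((n:ℝ)+1), κ (φ (s, x)) := by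
      exact hmeas.integral_prod_right'
    have h2 : (fun x => g n x) = fun x =>
        (∫ s in Set.Ioc (0:ℝ) ((n:ℝ)+1), κ (φ (s, x))) * ((n:ℝ)+1)⁻¹ := by
      funext x
      rw [hgdef]
      simp only []
      rw [intervalIntegral.integral_of_le (by positivity), div_eq_mul_inv]
      push_cast
      ring_nf
    show AEStronglyMeasurable (fun x => g n x) μ
    rw [h2]
    exact (h1.mul_const _).aestronglyMeasurable
  have h_bound : ∀ n : ℕ, ∀ᵐ x ∂μ, ‖g n x‖ ≤ B := by
    intro n
    refine Filter.Eventually.of_forall fun x => ?_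
    have hnorm : ‖∫ s in (0:ℝ)..((n:ℕ)+1 : ℕ), κ (φ (s, x))‖ ≤ B * |((n:ℕ)+1 : ℕ) - (0:ℝ)| := by
      refine intervalIntegral.norm_integral_le_of_norm_le_const fun s _ => ?_
      simpa [Real.norm_eq_abs] using hB (φ (s, x))
    rw [hgdef]
    simp only [Real.norm_eq_abs, abs_div]
    rw [div_le_iff₀ (by positivity)]
    calc |∫ s in (0:ℝ)..((n:ℕ)+1 : ℕ), κ (φ (s, x))|
        ≤ B * |((n:ℕ)+1 : ℕ) - (0:ℝ)| := hnorm
      _ = B * |(n:ℝ)+1| := by push_cast; ring_nf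
  have h_lim : ∀ᵐ x ∂μ, Filter.Tendsto (fun n => g n x) Filter.atTop (nhds 0) := by
    filter_upwards [hbound] with x hx
    obtain ⟨M, hM⟩ := hx
    have hsq : ∀ n : ℕ, ‖g n x‖ ≤ M * (1 / ((n:ℝ)+1)) := by
      intro n
      have h := hM (((n+1 : ℕ) : ℝ)) (by positivity)
      rw [hgdef]
      simp only [Real.norm_eq_abs, abs_div, abs_of_pos (hTpos n), mul_one_div]
      gcongr
    refine squeeze_zero_norm hsq ?_
    have := (tendsto_one_div_add_atTop_nhds_zero_nat).const_mul M
    simpa using this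
  have hconv := tendsto_integral_of_dominated_convergence (fun _ => B) hF_meas
    (integrable_const B) h_bound h_lim
  have hconst : Filter.Tendsto (fun n : ℕ => ∫ x, g n x ∂μ) Filter.atTop
      (nhds (∫ x, κ x ∂μ)) := by
    simp only [hgint]
    exact tendsto_const_nhds
  have hconv' : Filter.Tendsto (fun n : ℕ => ∫ x, g n x ∂μ) Filter.atTop (nhds 0) := by
    simpa using hconv
  exact tendsto_nhds_unique hconst hconv'
end
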